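/- Let A₁,...,A_m be matrices with n columns such that the stacked matrix A = col{A₁,...,A_m} has full row rank, let P_i be the orthogonal projection onto ker A_i, let P̄ = diag{P₁,...,P_m}, and let H̄ = H ⊗ I_n where H is the incidence matrix of a connected undirected graph on m nodes. Then image H̄ ∩ ker P̄ = {0}. -/

import Mathlib

open Matrix

/-- `H` is an (oriented) incidence matrix: every column (edge) has exactly one `+1`
(its head), one `-1` (its tail), and zeros elsewhere. -/
def IsIncidence {m mb : ℕ} (H : Matrix (Fin m) (Fin mb) ℝ) : Prop :=
  ∀ e, ∃ hd tl : Fin m, hd ≠ tl ∧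
    ∀ i, H i e = if i = hd then 1 else if i = tl then -1 else 0

/-- The undirected graph underlying the incidence matrix `H`. -/
def IncGraph {m mb : ℕ} (H : Matrix (Fin m) (Fin mb) ℝ) : SimpleGraph (Fin m) :=
  SimpleGraph.fromRel fun i j => ∃ e, H i e ≠ 0 ∧ H j e ≠ 0

/-- `P` is the orthogonal projection onto `ker Ai`. -/
def IsOrthProjKer {ni n : ℕ} (Ai : Matrix (Fin ni) (Fin n) ℝ)
    (P : Matrix (Fin n) (Fin n) ℝ) : Prop :=
  Pᵀ = P ∧ P * P = P ∧ ∀ v, P.mulVec v = v ↔ Ai.mulVec v = 0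

/-- With `A = col{A₁,...,Aₘ}` of full row rank (linearly independent rows),
`P̄ = diag{P₁,...,Pₘ}` the block projections onto `ker Aᵢ`, and `H̄ = H ⊗ Iₙ` for the
incidence matrix `H` of a connected graph: `image H̄ ∩ ker P̄ = {0}`.
(A vector of `image H̄` is written blockwise as `i ↦ ∑ e, H i e • x e`.) -/
-- aux: if y ⊥ ker B then y ∈ row space of B
lemma rowspace {k n : ℕ} (B : Matrix (Fin k) (Fin n) ℝ) (y : Fin n → ℝ)
    (h : ∀ v, B.mulVec v = 0 → y ⬝ᵥ v = 0) : ∃ c, y = Bᵀ.mulVec c := by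
  set T := Matrix.toEuclideanLin B with hT
  have hadj : Matrix.toEuclideanLin Bᵀ = LinearMap.adjoint T := by
    rw [hT, ← Matrix.toEuclideanLin_conjTranspose_eq_adjoint]
    congr 1
  have hker : LinearMap.ker T = (LinearMap.range (LinearMap.adjoint T))ᗮ := by
    ext v
    simp only [LinearMap.mem_ker, Submodule.mem_orthogonal]
    constructor
    · rintro hv _ ⟨u, rfl⟩
      rw [LinearMap.adjoint_inner_left, hv, inner_zero_right]
    · intro hv
      have : ∀ u, inner ℝ (T v) u = (0:ℝ) := by
        intro u
        rw [← LinearMap.adjoint_inner_right]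
        rw [real_inner_comm]
        exact hv _ ⟨u, rfl⟩
      exact inner_self_eq_zero.mp (this (T v))
  have hmem : (WithLp.equiv 2 (Fin n → ℝ)).symm y ∈ (LinearMap.ker T)ᗮ := by
    rw [Submodule.mem_orthogonal]
    intro u hu
    have h2 : B.mulVec (WithLp.equiv 2 (Fin n → ℝ) u) = 0 := by
      have := Matrix.ofLp_toEuclideanLin_apply B u
      rw [← hT] at this
      rw [LinearMap.mem_ker] at hu
      rw [hu] at this
      simpa using this.symm
    have h3 := h _ h2
    rw [real_inner_comm]
    simpa [EuclideanSpace.inner_eq_star_dotProduct, dotProduct, mul_comm] using h3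
  rw [hker, Submodule.orthogonal_orthogonal] at hmem
  obtain ⟨c, hc⟩ := hmem
  refine ⟨WithLp.equiv 2 (Fin k → ℝ) c, ?_⟩
  rw [← hadj] at hc
  have := Matrix.ofLp_toEuclideanLin_apply Bᵀ c
  rw [hc] at this
  simpa using this

theorem stmt_4 {m mb n : ℕ} (ni : Fin m → ℕ)
    (A : ∀ i, Matrix (Fin (ni i)) (Fin n) ℝ)
    (hA : LinearIndependent ℝ (fun p : Σ i, Fin (ni i) => A p.1 p.2))
    (P : Fin m → Matrix (Fin n) (Fin n) ℝ)
    (hP : ∀ i, IsOrthProjKer (A i) (P i))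
    (H : Matrix (Fin m) (Fin mb) ℝ) (hH : IsIncidence H)
    (hconn : (IncGraph H).Connected)
    (x : Fin mb → Fin n → ℝ)
    (hker : ∀ i, (P i).mulVec (∑ e, H i e • x e) = 0) :
    ∀ i, (∑ e, H i e • x e) = 0 := by
  classical
  set y : Fin m → Fin n → ℝ := fun i => ∑ e, H i e • x e with hy
  -- each block is orthogonal to ker (A i)
  have hperp : ∀ i v, (A i).mulVec v = 0 → y i ⬝ᵥ v = 0 := by
    intro i v hv
    obtain ⟨hsym, _, hchar⟩ := hP i
    have hpv : (P i).mulVec v = v := (hchar v).mpr hv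
    calc y i ⬝ᵥ v = y i ⬝ᵥ (P i).mulVec v := by rw [hpv]
      _ = ((P i)ᵀ.mulVec (y i)) ⬝ᵥ v := by
          rw [Matrix.dotProduct_mulVec, ← Matrix.mulVec_transpose]
      _ = 0 := by rw [hsym, hker i]; simp
  have hc : ∀ i, ∃ c, y i = (A i)ᵀ.mulVec c := fun i => rowspace (A i) (y i) (hperp i)
  choose c hcy using hc
  -- column sums of H vanish
  have hcol : ∀ e, ∑ i, H i e = 0 := by
    intro e
    obtain ⟨hd, tl, hne, hval⟩ := hH e
    have hsplit : ∀ i, H i e =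
        (if i = hd then (1:ℝ) else 0) + (if i = tl then -1 else 0) := by
      intro i
      rw [hval i]
      by_cases h1 : i = hd
      · subst h1; simp [hne]
      · by_cases h2 : i = tl <;> simp [h1, h2, Ne.symm hne]
    simp [hsplit, Finset.sum_add_distrib]
  -- blocks sum to zero
  have hsum : ∑ i, y i = 0 := by
    rw [hy, Finset.sum_comm]
    refine Finset.sum_eq_zero fun e _ => ?_
    rw [← Finset.sum_smul, hcol e, zero_smul]
  -- translate into a vanishing linear combination of the rows of A
  have hzero : ∑ p : Σ i, Fin (ni i), c p.1 p.2 • A p.1 p.2 = 0 := by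
    rw [← Finset.univ_sigma_univ, Finset.sum_sigma]
    have : ∀ i, ∑ r, c i r • A i r = y i := by
      intro i
      rw [hcy i]
      funext j
      simp [Matrix.mulVec, dotProduct, Finset.sum_apply, mul_comm]
    simp only [this]
    exact hsum
  have hcz : ∀ p : Σ i, Fin (ni i), c p.1 p.2 = 0 :=
    Fintype.linearIndependent_iff.mp hA _ hzero
  intro i
  have : c i = 0 := funext fun r => hcz ⟨i, r⟩
  have := hcy i
  rw [‹c i = 0›] at this
  simpa [hy] using this
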